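/- Let a > 0 and b > 0 be real numbers and define f : ℝ → ℝ by f(x) = a·log σ(x) + b·log σ(−x). Then f is strictly concave on ℝ, and f attains its unique global maximum at x* = log(a/b). -/

import Mathlib

/-- The logistic sigmoid function. -/
noncomputable def sigmoid (x : ℝ) : ℝ := 1 / (1 + Real.exp (-x))

lemma log_sigmoid (x : ℝ) : Real.log (sigmoid x) = -Real.log (1 + Real.exp (-x)) := by
  rw [sigmoid, Real.log_div one_ne_zero (by positivity), Real.log_one, zero_sub]

/-- The per-entry SGNS objective `f x = a·log σ(x) + b·log σ(−x)` (with
positive-sample weight `a > 0` and negative-sample weight `b > 0`) is strictly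
concave on ℝ and attains its unique global maximum at `x* = log (a / b)`. -/
theorem sgns_per_entry_strictly_concave_unique_max
    (a b : ℝ) (ha : 0 < a) (hb : 0 < b)
    (f : ℝ → ℝ)
    (hf : ∀ x, f x = a * Real.log (sigmoid x) + b * Real.log (sigmoid (-x))) :
    StrictConcaveOn ℝ Set.univ f ∧
      ∀ x : ℝ, x ≠ Real.log (a / b) → f x < f (Real.log (a / b)) := by
  have hfx : f = fun x => -(a * Real.log (1 + Real.exp (-x)))
      - b * Real.log (1 + Real.exp x) := by
    funext x
    rw [hf x, log_sigmoid, log_sigmoid, neg_neg]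
    ring
  set g : ℝ → ℝ := fun x => (a + b) / (1 + Real.exp x) - b with hg
  have hderiv : ∀ x, HasDerivAt f (g x) x := by
    intro x
    have hpx : (0:ℝ) < 1 + Real.exp x := by positivity
    have hpn : (0:ℝ) < 1 + Real.exp (-x) := by positivity
    have h1 : HasDerivAt (fun x : ℝ => Real.log (1 + Real.exp (-x)))
        (-Real.exp (-x) / (1 + Real.exp (-x))) x := by
      have := ((Real.hasDerivAt_exp (-x)).comp x (hasDerivAt_neg x)).const_add 1
      have h := (Real.hasDerivAt_log hpn.ne').comp x
        (by simpa [mul_comm] using this : HasDerivAt (fun y => 1 + Real.exp (-y)) (-Real.exp (-x)) x)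
      rw [div_eq_inv_mul]; exact h
    have h2 : HasDerivAt (fun x : ℝ => Real.log (1 + Real.exp x))
        (Real.exp x / (1 + Real.exp x)) x := by
      have := (Real.hasDerivAt_exp x).const_add 1
      have h := (Real.hasDerivAt_log hpx.ne').comp x this
      rw [div_eq_inv_mul]; exact h
    have := ((h1.const_mul a).neg).sub (h2.const_mul b)
    rw [hfx]
    refine this.congr_deriv ?_
    have hex : Real.exp (-x) = 1 / Real.exp x := by
      rw [Real.exp_neg]; ring
    rw [hg, hex]
    field_simp [hex]
    ring
  have hganti : StrictAnti g := by
    intro x y hxy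
    have : (a + b) / (1 + Real.exp y) < (a + b) / (1 + Real.exp x) :=
      div_lt_div_of_pos_left (by positivity) (by positivity)
        (by simpa using Real.exp_lt_exp.2 hxy)
    simpa [hg] using sub_lt_sub_right this b
  have hdf : deriv f = g := funext fun x => (hderiv x).deriv
  have hcont : Continuous f :=
    continuous_iff_continuousAt.2 fun x => (hderiv x).continuousAt
  constructor
  · exact StrictAnti.strictConcaveOn_univ_of_deriv hcont (hdf ▸ hganti)
  · set c := Real.log (a / b) with hc
    have hec : Real.exp c = a / b := Real.exp_log (by positivity)
    have hgc : g c = 0 := by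
      rw [hg]
      simp only [hec]
      field_simp
      ring
    intro x hx
    rcases lt_or_gt_of_ne hx with h | h
    · -- increasing on Iic c
      have hmono : StrictMonoOn f (Set.Iic c) := by
        apply strictMonoOn_of_deriv_pos (convex_Iic c) hcont.continuousOn
        intro z hz
        rw [interior_Iic] at hz
        rw [hdf]
        have := hganti hz
        rw [hgc] at this
        linarith
      exact hmono h.le (Set.mem_Iic.2 le_rfl) h
    · have hanti : StrictAntiOn f (Set.Ici c) := by
        apply strictAntiOn_of_deriv_neg (convex_Ici c) hcont.continuousOn
        intro z hz
        rw [interior_Ici] at hz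
        rw [hdf]
        have := hganti hz
        rw [hgc] at this
        linarith
      exact hanti (Set.mem_Ici.2 le_rfl) h.le h
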